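/- Let F be a probability measure on ℝ that assigns probability 1 to the interval [u, v] and has finite mean, let γ ∈ (0,1), let v' > v, and let U denote the uniform probability distribution on the interval (v, v']. Define the mixture F' = (1 − γ)·F + γ·U. Then the Kullback–Leibler divergence satisfies D(F, F') = −log(1 − γ), and the mean of F' equals (1 − γ)·μ(F) + (γ/2)·(v + v'). -/

import Mathlib

open MeasureTheory Real Classical

/-- Kullback–Leibler divergence between measures on ℝ, as an extended real:
`∫ log(dF/dF') dF` when `F ≪ F'`, and `⊤` otherwise. -/
noncomputable def klDivergence (F F' : Measure ℝ) : EReal :=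
  if F ≪ F' then ((∫ x, Real.log (F.rnDeriv F' x).toReal ∂F : ℝ) : EReal) else ⊤

/-- The uniform probability distribution on the interval `(v, v']`. -/
noncomputable def uniformOnIoc (v v' : ℝ) : Measure ℝ :=
  (ENNReal.ofReal (v' - v))⁻¹ • (volume.restrict (Set.Ioc v v'))

theorem kl_and_mean_of_uniform_mixture
    (F : Measure ℝ) [IsProbabilityMeasure F]
    (u v v' : ℝ) (hF : F (Set.Icc u v) = 1)
    (hInt : Integrable (fun x => x) F)
    (γ : ℝ) (hγ0 : 0 < γ) (hγ1 : γ < 1) (hv : v < v') :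
    klDivergence F ((ENNReal.ofReal (1 - γ)) • F
        + (ENNReal.ofReal γ) • uniformOnIoc v v') = ((-Real.log (1 - γ) : ℝ) : EReal)
    ∧ (∫ x, x ∂((ENNReal.ofReal (1 - γ)) • F + (ENNReal.ofReal γ) • uniformOnIoc v v'))
        = (1 - γ) * (∫ x, x ∂F) + γ / 2 * (v + v') := by
  have h1γ : (0:ℝ) < 1 - γ := by linarith
  set c : ENNReal := ENNReal.ofReal (1 - γ) with hc
  have hc0 : c ≠ 0 := by simp [hc, ENNReal.ofReal_eq_zero]; linarith
  have hcT : c ≠ ⊤ := ENNReal.ofReal_ne_top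
  set U : Measure ℝ := uniformOnIoc v v' with hUdef
  set F' : Measure ℝ := c • F + (ENNReal.ofReal γ) • U with hF'def
  have hvv : (0:ℝ) < v' - v := by linarith
  -- U of Icc u v is zero
  have hdisj : Set.Icc u v ∩ Set.Ioc v v' = ∅ := by
    ext x; simp only [Set.mem_inter_iff, Set.mem_Icc, Set.mem_Ioc, Set.mem_empty_iff_false,
      iff_false]
    rintro ⟨⟨_, h1⟩, h2, _⟩; linarith
  have hU0 : U (Set.Icc u v) = 0 := by
    rw [hUdef, uniformOnIoc, Measure.smul_apply, Measure.restrict_apply measurableSet_Icc]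
    simp [hdisj]
  -- F of complement of Icc is zero
  have hFc : F (Set.Icc u v)ᶜ = 0 := by
    rw [measure_compl measurableSet_Icc (by simp), hF]; simp
  have haemem : ∀ᵐ x ∂F, x ∈ Set.Icc u v := by
    rw [Filter.eventually_iff, mem_ae_iff]
    exact hFc
  have hFres : F.restrict (Set.Icc u v) = F :=
    Measure.restrict_eq_self_of_ae_mem haemem
  -- absolute continuity
  have hAC : F ≪ F' := by
    intro A hA
    rw [hF'def, Measure.add_apply, Measure.smul_apply, Measure.smul_apply] at hA
    have := (add_eq_zero.mp hA).1
    rw [smul_eq_mul, mul_eq_zero] at this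
    tauto
  -- withDensity representation
  have hwd : F'.withDensity ((Set.Icc u v).indicator fun _ => c⁻¹) = F := by
    rw [withDensity_indicator measurableSet_Icc, withDensity_const, hF'def,
      Measure.restrict_add, Measure.restrict_smul, Measure.restrict_smul,
      Measure.restrict_eq_zero.mpr hU0, smul_zero, add_zero, hFres, smul_smul,
      ENNReal.inv_mul_cancel hc0 hcT, one_smul]
  haveI : IsFiniteMeasure F' := by
    constructor
    rw [hF'def, Measure.add_apply, Measure.smul_apply, Measure.smul_apply, smul_eq_mul,
      smul_eq_mul]
    have hUuniv : U Set.univ ≠ ⊤ := by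
      rw [hUdef, uniformOnIoc, Measure.smul_apply, Measure.restrict_apply_univ,
        Real.volume_Ioc, smul_eq_mul]
      exact ENNReal.mul_ne_top (ENNReal.inv_ne_top.mpr (ENNReal.ofReal_pos.mpr hvv).ne') ENNReal.ofReal_ne_top
    exact ENNReal.add_lt_top.mpr ⟨ENNReal.mul_lt_top hcT.lt_top (by simp),
      ENNReal.mul_lt_top ENNReal.ofReal_lt_top hUuniv.lt_top⟩
  have hmeas : Measurable ((Set.Icc u v).indicator fun _ : ℝ => c⁻¹) :=
    measurable_const.indicator measurableSet_Icc
  have hrn : F.rnDeriv F' =ᵐ[F'] (Set.Icc u v).indicator fun _ => c⁻¹ := by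
    have := Measure.rnDeriv_withDensity F' hmeas
    rw [hwd] at this; exact this
  have hrnF : F.rnDeriv F' =ᵐ[F] (Set.Icc u v).indicator fun _ => c⁻¹ :=
    hrn.filter_mono hAC.ae_le
  have hlog : ∀ᵐ x ∂F, Real.log (F.rnDeriv F' x).toReal = Real.log (1 - γ)⁻¹ := by
    filter_upwards [hrnF, haemem] with x hx hmem
    rw [hx, Set.indicator_of_mem hmem, ENNReal.toReal_inv, ENNReal.toReal_ofReal h1γ.le]
  have hKL : klDivergence F F' = ((-Real.log (1 - γ) : ℝ) : EReal) := by
    rw [klDivergence, if_pos hAC, integral_congr_ae hlog, integral_const]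
    simp [Real.log_inv]
  refine ⟨hKL, ?_⟩
  -- mean part
  have hIntU : Integrable (fun x => x) U := by
    rw [hUdef, uniformOnIoc]
    exact (continuous_id.integrableOn_Ioc).integrable.smul_measure
      (ENNReal.inv_ne_top.mpr (ENNReal.ofReal_pos.mpr hvv).ne')
  have hmeanU : (∫ x, x ∂U) = (v + v') / 2 := by
    rw [hUdef, uniformOnIoc, integral_smul_measure, ENNReal.toReal_inv,
      ENNReal.toReal_ofReal hvv.le]
    have : (∫ x in Set.Ioc v v', x) = (v' ^ 2 - v ^ 2) / 2 := by
      rw [← intervalIntegral.integral_of_le hv.le, integral_id]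
    rw [this]
    field_simp
    rw [smul_eq_mul]
    linear_combination (v + v') * inv_mul_cancel₀ hvv.ne'
  rw [integral_add_measure (hInt.smul_measure hcT) (hIntU.smul_measure ENNReal.ofReal_ne_top),
    integral_smul_measure, integral_smul_measure, hmeanU, ENNReal.toReal_ofReal h1γ.le,
    ENNReal.toReal_ofReal hγ0.le]
  simp only [smul_eq_mul]
  ring
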